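/- In the free monoid on an alphabet A, define a word w to be an isoterm for a monoid M if M violates every nontrivial identity w ≈ w'. If the word xy (product of two distinct letters) is an isoterm for M, then every identity u ≈ v satisfied by M has the same set of multiple letters on both sides (mul(u) = mul(v)) and the restriction of u to its simple letters equals the restriction of v to its simple letters (u(simp(u)) = v(simp(v))). -/

import Mathlib

open List


/-- Product of a map sending everything except `a` to `1` is a power. -/
lemma prod_map_single {M : Type*} [Monoid M] (a : ℕ) (m : M) :
    ∀ l : List ℕ, (l.map (fun b => if b = a then m else 1)).prod = m ^ l.count a := by
  intro l
  induction l with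
  | nil => simp
  | cons c t ih =>
    by_cases hc : c = a <;>
      simp [hc, ih, List.count_cons, pow_succ'] 

/-- If `f` kills everything outside the filter, products agree. -/
lemma prod_map_filter {M : Type*} [Monoid M] (p : ℕ → Bool) (f : ℕ → M)
    (h : ∀ a, p a = false → f a = 1) :
    ∀ l : List ℕ, (l.map f).prod = ((l.filter p).map f).prod := by
  intro l
  induction l with
  | nil => simp
  | cons c t ih =>
    cases hc : p c with
    | false => simp [List.filter_cons, hc, h c hc, ih]
    | true => simp [List.filter_cons, hc, ih]

/-- A nodup list can't contain both `[a,b]` and `[b,a]` as sublists for `a ≠ b`. -/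
lemma sublist_asymm {a b : ℕ} (hab : a ≠ b) :
    ∀ {l : List ℕ}, l.Nodup → [a, b] <+ l → [b, a] <+ l → False := by
  intro l
  induction l with
  | nil => intro _ h1 _; cases h1
  | cons c t ih =>
    intro hnd h1 h2
    cases h1 with
    | cons _ h1' =>
      cases h2 with
      | cons _ h2' => exact ih hnd.of_cons h1' h2'
      | cons_cons _ h2' =>
        -- c = b, [a] <+ t; and [a,b] <+ t, so b ∈ t
        have hbt : b ∈ t := List.Sublist.subset h1' (by simp)
        exact (List.nodup_cons.mp hnd).1 hbt
    | cons_cons _ h1' =>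
      cases h2 with
      | cons _ h2' =>
        have hat : a ∈ t := List.Sublist.subset h2' (by simp)
        exact (List.nodup_cons.mp hnd).1 hat
      | cons_cons _ h2' => exact hab rfl

/-- Pair filter of a list with both counts one. -/
lemma pair_filter {l : List ℕ} {a b : ℕ} (hab : a ≠ b) (ha : l.count a = 1)
    (hb : l.count b = 1) :
    l.filter (fun c => c == a || c == b) = [a, b] ∨
    l.filter (fun c => c == a || c == b) = [b, a] := by
  set m := l.filter (fun c => c == a || c == b) with hm
  have hperm : m.Perm [a, b] := by
    rw [List.perm_iff_count]
    intro c
    by_cases hca : c = a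
    · subst hca
      rw [hm, List.count_filter (by simp)]
      simp [ha, List.count_cons, hab.symm]
    · by_cases hcb : c = b
      · subst hcb
        rw [hm, List.count_filter (by simp)]
        simp [hb, List.count_cons, hab, hca]
      · have : c ∉ m := by
          intro hc
          have := (List.mem_filter.mp hc).2
          simp at this
          rcases this with h | h
          · exact hca h
          · exact hcb h
        simp [List.count_eq_zero_of_not_mem this, List.count_cons, hca, hcb,
          Ne.symm hca, Ne.symm hcb]
  have hlen : m.length = 2 := by simpa using hperm.length_eq
  match m, hlen with
  | [c, d], _ =>
    have hac : a ∈ [c, d] := hperm.mem_iff.mpr (by simp)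
    have hbc : b ∈ [c, d] := hperm.mem_iff.mpr (by simp)
    simp at hac hbc
    rcases hac with rfl | rfl
    · rcases hbc with rfl | rfl
      · exact absurd rfl hab
      · left; rfl
    · rcases hbc with rfl | rfl
      · right; rfl
      · exact absurd rfl hab

/-- Two nodup lists with the same members and compatible pair orders are equal. -/
lemma order_ext : ∀ (l1 l2 : List ℕ), l1.Nodup → l2.Nodup →
    (∀ a, a ∈ l1 ↔ a ∈ l2) →
    (∀ a b, a ≠ b → [a, b] <+ l1 → [a, b] <+ l2) → l1 = l2 := by
  intro l1
  induction l1 with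
  | nil =>
    intro l2 _ _ hmem _
    cases l2 with
    | nil => rfl
    | cons d t2 => exact absurd ((hmem d).mpr (by simp)) (by simp)
  | cons c t1 ih =>
    intro l2 hnd1 hnd2 hmem horder
    cases l2 with
    | nil => exact absurd ((hmem c).mp (by simp)) (by simp)
    | cons d t2 =>
      have hcd : c = d := by
        by_contra hcd
        have hct2 : c ∈ t2 := by
          have := (hmem c).mp (by simp)
          simp at this
          rcases this with h | h
          · exact absurd h hcd
          · exact h
        have hdt1 : d ∈ t1 := by
          have := (hmem d).mpr (by simp)
          simp at this
          rcases this with h | h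
          · exact absurd h.symm hcd
          · exact h
        have h1 : [c, d] <+ c :: t1 :=
          List.Sublist.cons₂ c (List.singleton_sublist.mpr hdt1)
        have h2 : [c, d] <+ d :: t2 := horder c d hcd h1
        have h3 : [d, c] <+ d :: t2 :=
          List.Sublist.cons₂ d (List.singleton_sublist.mpr hct2)
        exact sublist_asymm hcd hnd2 h2 h3
      subst hcd
      have hcn1 : c ∉ t1 := (List.nodup_cons.mp hnd1).1
      have hcn2 : c ∉ t2 := (List.nodup_cons.mp hnd2).1
      congr 1
      refine ih t2 (List.nodup_cons.mp hnd1).2 (List.nodup_cons.mp hnd2).2 ?_ ?_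
      · intro a
        constructor
        · intro ha
          have := (hmem a).mp (by simp [ha])
          simp at this
          rcases this with rfl | h
          · exact absurd ha hcn1
          · exact h
        · intro ha
          have := (hmem a).mpr (by simp [ha])
          simp at this
          rcases this with rfl | h
          · exact absurd ha hcn2
          · exact h
      · intro a b hab hsub
        have hat1 : a ∈ t1 := List.Sublist.subset hsub (by simp)
        have := horder a b hab (hsub.cons c)
        cases this with
        | cons _ h => exact h
        | cons_cons _ h => exact absurd hat1 hcn1

theorem stmt_13 {M : Type*} [Monoid M] (x y : ℕ) (hxy : x ≠ y)
    (hiso : ∀ w' : List ℕ, w' ≠ [x, y] →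
      ¬ ∀ f : ℕ → M, (([x, y]).map f).prod = (w'.map f).prod) :
    ∀ u v : List ℕ, (∀ f : ℕ → M, (u.map f).prod = (v.map f).prod) →
      (∀ a : ℕ, 2 ≤ u.count a ↔ 2 ≤ v.count a) ∧
      u.filter (fun a => u.count a = 1) = v.filter (fun a => v.count a = 1) := by
  intro u v hid
  -- powers of each letter agree
  have hpow : ∀ (a : ℕ) (m : M), m ^ u.count a = m ^ v.count a := by
    intro a m
    have := hid (fun b => if b = a then m else 1)
    rwa [prod_map_single, prod_map_single] at this
  -- the key consequence of the isoterm property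
  have key : ∀ k j : ℕ, (∀ m : M, m ^ k = m ^ j) →
      (2 ≤ k → 2 ≤ j) ∧ (k = 1 → j = 1) := by
    intro k j hkj
    constructor
    · intro hk
      by_contra hj
      push_neg at hj
      -- j ≤ 1
      have hj1 : j ≤ 1 := by omega
      set t := k + 1 - j with ht
      have ht2 : 2 ≤ t := by omega
      have hmt : ∀ m : M, m ^ t = m := by
        intro m
        have : m ^ t * m ^ j = m ^ j * m := by
          rw [← pow_add]
          have htj : t + j = k + 1 := by omega
          rw [htj, pow_succ, hkj]
        interval_cases j
        · simpa using this
        · have h1 : m ^ k = m := by simpa using hkj m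
          have : t = k := by omega
          rw [this, h1]
      apply hiso (x :: List.replicate t y)
      · intro h
        have := congrArg List.length h
        simp at this
        omega
      · intro f
        simp [List.prod_replicate, hmt (f y)]
    · intro hk1
      subst hk1
      by_contra hj1
      rcases Nat.lt_or_ge j 1 with hj | hj
      · -- j = 0 : M is trivial
        have hj0 : j = 0 := by omega
        subst hj0
        have htriv : ∀ m : M, m = 1 := by
          intro m; simpa using hkj m
        apply hiso [x]
        · intro h
          have := congrArg List.length h
          simp at this
        · intro f
          simp [htriv (f y)]
      · -- j ≥ 2, contradiction using the power identity in reverse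
        have hj2 : 2 ≤ j := by omega
        have := hkj
        -- m ^ j = m for all m since m ^ 1 = m ^ j
        have hmj : ∀ m : M, m ^ j = m := by
          intro m; rw [← hkj m, pow_one]
        apply hiso (x :: List.replicate j y)
        · intro h
          have := congrArg List.length h
          simp at this
          omega
        · intro f
          simp [List.prod_replicate, hmj (f y)]
  have hmul : ∀ a : ℕ, 2 ≤ u.count a ↔ 2 ≤ v.count a := fun a =>
    ⟨(key _ _ (hpow a)).1, (key _ _ (fun m => (hpow a m).symm)).1⟩
  have hsimp : ∀ a : ℕ, u.count a = 1 ↔ v.count a = 1 := fun a =>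
    ⟨(key _ _ (hpow a)).2, (key _ _ (fun m => (hpow a m).symm)).2⟩
  refine ⟨hmul, ?_⟩
  set su := u.filter (fun a => u.count a = 1) with hsu
  set sv := v.filter (fun a => v.count a = 1) with hsv
  have hmemsu : ∀ a : ℕ, a ∈ su ↔ u.count a = 1 := by
    intro a
    rw [hsu, List.mem_filter]
    constructor
    · intro h; simpa using h.2
    · intro h
      refine ⟨?_, by simpa using h⟩
      have : 0 < u.count a := by omega
      exact List.count_pos_iff.mp this
  have hmemsv : ∀ a : ℕ, a ∈ sv ↔ v.count a = 1 := by
    intro a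
    rw [hsv, List.mem_filter]
    constructor
    · intro h; simpa using h.2
    · intro h
      refine ⟨?_, by simpa using h⟩
      have : 0 < v.count a := by omega
      exact List.count_pos_iff.mp this
  have hndsu : su.Nodup := by
    rw [List.nodup_iff_count_le_one]
    intro a
    by_cases ha : a ∈ su
    · have h1 : u.count a = 1 := (hmemsu a).mp ha
      calc su.count a ≤ u.count a := (List.filter_sublist (l := u)).count_le a
        _ = 1 := h1
    · simp [List.count_eq_zero_of_not_mem ha]
  have hndsv : sv.Nodup := by
    rw [List.nodup_iff_count_le_one]
    intro a
    by_cases ha : a ∈ sv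
    · have h1 : v.count a = 1 := (hmemsv a).mp ha
      calc sv.count a ≤ v.count a := (List.filter_sublist (l := v)).count_le a
        _ = 1 := h1
    · simp [List.count_eq_zero_of_not_mem ha]
  refine order_ext su sv hndsu hndsv
    (fun a => by rw [hmemsu, hmemsv]; exact hsimp a) ?_
  -- order transfer
  intro a b hab hsub
  have hasu : a ∈ su := List.Sublist.subset hsub (by simp)
  have hbsu : b ∈ su := List.Sublist.subset hsub (by simp)
  have hua : u.count a = 1 := (hmemsu a).mp hasu
  have hub : u.count b = 1 := (hmemsu b).mp hbsu
  have hva : v.count a = 1 := (hsimp a).mp hua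
  have hvb : v.count b = 1 := (hsimp b).mp hub
  set p : ℕ → Bool := fun c => c == a || c == b with hp
  -- filtering by the pair inside su is the same as in u
  have hfu : su.filter p = u.filter p := by
    rw [hsu, List.filter_filter]
    congr 1
    funext c
    by_cases hca : c = a
    · simp [hp, hca, hua]
    · by_cases hcb : c = b
      · simp [hp, hcb, hub]
      · simp [hp, hca, hcb]
  have hfv : sv.filter p = v.filter p := by
    rw [hsv, List.filter_filter]
    congr 1
    funext c
    by_cases hca : c = a
    · simp [hp, hca, hva]
    · by_cases hcb : c = b
      · simp [hp, hcb, hvb]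
      · simp [hp, hca, hcb]
  -- u.filter p = [a, b]
  have hufp : u.filter p = [a, b] := by
    rcases pair_filter hab hua hub with h | h
    · exact h
    · exfalso
      have hba : [b, a] <+ su := by
        rw [← hfu] at h
        rw [← h]
        exact List.filter_sublist (l := su)
      exact sublist_asymm hab hndsu hsub hba
  -- v.filter p = [a, b], else we get a commutation identity
  have hvfp : v.filter p = [a, b] := by
    rcases pair_filter hab hva hvb with h | h
    · exact h
    · exfalso
      -- derive commutativity
      have hcomm : ∀ g : ℕ → M, g x * g y = g y * g x := by
        intro g
        set h0 : ℕ → M := fun c => if c = a then g x else if c = b then g y else 1 with hh0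
        have hker : ∀ c, p c = false → h0 c = 1 := by
          intro c hc
          simp [hp] at hc
          simp [hh0, hc.1, hc.2]
        have h1 : (u.map h0).prod = g x * g y := by
          rw [prod_map_filter p h0 hker u, hufp]
          simp [hh0, hab.symm]
        have h2 : (v.map h0).prod = g y * g x := by
          rw [prod_map_filter p h0 hker v, h]
          simp [hh0, hab.symm]
        rw [← h1, ← h2]
        exact hid h0
      apply hiso [y, x]
      · intro hcontra
        have : y = x := by
          have := congrArg (fun l => l.headI) hcontra
          simpa using this
        exact hxy this.symm
      · intro f
        simpa using hcomm f
  have hfinal : sv.filter p = [a, b] := hfv.trans hvfp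
  rw [← hfinal]
  exact List.filter_sublist (l := sv)
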